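/- Let f : ℂ^N → ℝ be differentiable (over ℝ) with L-Lipschitz gradient ∇f for some L > 0, let h : ℂ^N → ℝ be convex and differentiable, and set F = h + f. Let C ⊆ ℂ^N be a nonempty closed convex set with F* := inf_{x ∈ C} F(x) finite. Let 0 < η < η̄ and ν > 0. Suppose a sequence x₁, x₂, … in C is generated as follows: for each k, B_k ∈ ℂ^{N×N} is Hermitian with η·I_N ⪯ B_k ⪯ η̄·I_N, the stepsize satisfies 0 < α_min ≤ α_k ≤ η/L where α_min := inf_k α_k > 0, and x_{k+1} is a minimizer over C of x̄ ↦ S_h(x̄, x_k, ∇f(x_k), B_k, α_k). Moreover suppose the proximal Polyak–Łojasiewicz inequality D_h^C(z, ∇f(z), I_N, α/η̄) ≥ 2ν·(F(z) − F*) holds for all z ∈ C and all α ∈ (0, η/L]. Then for every K ≥ 1 the average over the first K iterates satisfies (1/K)·Σ_{k=1}^{K} (F(x_k) − F*) ≤ η̄·(F(x₁) − F*)/(ν·α_min·K); equivalently, if k' is drawn uniformly at random from {1, …, K}, then E[F(x_{k'}) − F*] ≤ η̄·(F(x₁) − F*)/(ν·α_min·K). -/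

import Mathlib

open scoped ComplexOrder

noncomputable section

/-- `ℂ^N` with the standard complex inner product (conjugate-linear in the
first argument) and the induced norm. -/
abbrev EC (N : ℕ) := EuclideanSpace ℂ (Fin N)

/-- Weighted squared norm `‖z‖_W² = zᴴ W z` (its real part, which is the full
value when `W` is Hermitian). -/
def wnorm2 {N : ℕ} (W : Matrix (Fin N) (Fin N) ℂ) (z : EC N) : ℝ :=
  (dotProduct (fun i => starRingEnd ℂ (z i)) (W.mulVec (fun i => z i))).re

/-- Surrogate `S_h(x̄, x, g, W, α) = Re⟨g, x̄ − x⟩ + (1/(2α))‖x̄ − x‖_W² + h(x̄) − h(x)`. -/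
def Sh {N : ℕ} (h : EC N → ℝ) (W : Matrix (Fin N) (Fin N) ℂ) (α : ℝ)
    (g x xb : EC N) : ℝ :=
  (inner ℂ g (xb - x) : ℂ).re + (1 / (2 * α)) * wnorm2 W (xb - x) + h xb - h x

/-- `D_h^C(x, g, W, α) = −(2/α)·inf_{x̄ ∈ C} S_h(x̄, x, g, W, α)`. -/
def Dh {N : ℕ} (h : EC N → ℝ) (C : Set (EC N)) (W : Matrix (Fin N) (Fin N) ℂ)
    (α : ℝ) (g x : EC N) : ℝ :=
  -(2 / α) * sInf ((fun xb => Sh h W α g x xb) '' C)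

/-- The real-linear continuous functional `d ↦ Re⟨g, d⟩`, used to say that a
real-differentiable `f : ℂ^N → ℝ` has gradient `g` at a point. -/
def gradDual {N : ℕ} (g : EC N) : EC N →L[ℝ] ℝ :=
  Complex.reCLM.comp ((innerSL ℂ g).restrictScalars ℝ)

/-- The rank-one matrix `u·uᴴ` with entries `uᵢ · conj(uⱼ)`. -/
def rankOne {N : ℕ} (u : EC N) : Matrix (Fin N) (Fin N) ℂ :=
  Matrix.vecMulVec (fun i => u i) (fun i => starRingEnd ℂ (u i))

end

lemma gradDual_apply {N : ℕ} (g d : EC N) : gradDual g d = (inner ℂ g d : ℂ).re := rfl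

lemma descent {N : ℕ} (f : EC N → ℝ) (gradf : EC N → EC N) (L : ℝ) (hL : 0 < L)
    (hfdiff : ∀ z : EC N, HasFDerivAt f (gradDual (gradf z)) z)
    (hlip : ∀ z₁ z₂ : EC N, ‖gradf z₁ - gradf z₂‖ ≤ L * ‖z₁ - z₂‖)
    (x d : EC N) :
    f (x + d) ≤ f x + (inner ℂ (gradf x) d : ℂ).re + L / 2 * ‖d‖ ^ 2 := by
  set φ' : ℝ → ℝ := fun t => (inner ℂ (gradf (x + t • d)) d : ℂ).re with hφ'
  have hgcont : Continuous gradf := by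
    have : LipschitzWith (Real.toNNReal L) gradf := by
      apply LipschitzWith.of_dist_le_mul
      intro a b
      simpa [dist_eq_norm, Real.coe_toNNReal L hL.le] using hlip a b
    exact this.continuous
  have hcont : Continuous φ' := by
    apply Complex.continuous_re.comp
    exact Continuous.inner (hgcont.comp (by continuity)) continuous_const
  have hderiv : ∀ t ∈ Set.uIcc (0:ℝ) 1, HasDerivAt (fun t : ℝ => f (x + t • d)) (φ' t) t := by
    intro t _
    have hu : HasDerivAt (fun t : ℝ => x + t • d) d t := by
      simpa using ((hasDerivAt_id t).smul_const d).const_add x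
    exact (hfdiff (x + t • d)).comp_hasDerivAt t hu
  have hint : f (x + (1:ℝ) • d) - f (x + (0:ℝ) • d) = ∫ t in (0:ℝ)..1, φ' t :=
    (intervalIntegral.integral_eq_sub_of_hasDerivAt hderiv
      (hcont.intervalIntegrable 0 1)).symm
  have hbound : ∫ t in (0:ℝ)..1, φ' t ≤ ∫ t in (0:ℝ)..1, (φ' 0 + (L * ‖d‖ ^ 2) * t) := by
    apply intervalIntegral.integral_mono_on zero_le_one (hcont.intervalIntegrable 0 1)
      (((by fun_prop : Continuous fun t : ℝ => φ' 0 + (L * ‖d‖ ^ 2) * t)).intervalIntegrable 0 1)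
    intro t ht
    have key : φ' t - φ' 0 ≤ L * ‖d‖ ^ 2 * t := by
      have h1 : φ' t - φ' 0 = (inner ℂ (gradf (x + t • d) - gradf x) d : ℂ).re := by
        simp [hφ', inner_sub_left]
      rw [h1]
      have h2 : ((inner ℂ (gradf (x + t • d) - gradf x) d : ℂ)).re ≤
          ‖gradf (x + t • d) - gradf x‖ * ‖d‖ := by
        calc ((inner ℂ (gradf (x + t • d) - gradf x) d : ℂ)).re
            ≤ ‖(inner ℂ (gradf (x + t • d) - gradf x) d : ℂ)‖ := Complex.re_le_norm _
          _ ≤ _ := norm_inner_le_norm _ _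
      have h3 : ‖gradf (x + t • d) - gradf x‖ ≤ L * (t * ‖d‖) := by
        have := hlip (x + t • d) x
        simpa [norm_smul, abs_of_nonneg ht.1] using this
      nlinarith [norm_nonneg d, ht.1, norm_nonneg (gradf (x + t • d) - gradf x)]
    linarith
  have hrhs : ∫ t in (0:ℝ)..1, (φ' 0 + (L * ‖d‖ ^ 2) * t) = φ' 0 + L * ‖d‖ ^ 2 / 2 := by
    rw [intervalIntegral.integral_add (intervalIntegrable_const)
      (((by fun_prop : Continuous fun t : ℝ => (L * ‖d‖ ^ 2) * t)).intervalIntegrable 0 1),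
      intervalIntegral.integral_const_mul]
    simp [integral_id]
    ring
  have hφ0 : φ' 0 = (inner ℂ (gradf x) d : ℂ).re := by simp [hφ']
  have h1 : f (x + d) - f x = ∫ t in (0:ℝ)..1, φ' t := by simpa using hint
  linarith [hbound, hrhs.le, h1, hφ0]

lemma wnorm2_nonneg {N : ℕ} {M : Matrix (Fin N) (Fin N) ℂ} (hM : M.PosSemidef) (z : EC N) :
    0 ≤ wnorm2 M z := by
  have := hM.re_dotProduct_nonneg (fun i => z i)
  simpa [wnorm2, dotProduct, Pi.star_def, Complex.star_def] using this

lemma wnorm2_sub {N : ℕ} (M M' : Matrix (Fin N) (Fin N) ℂ) (z : EC N) :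
    wnorm2 (M - M') z = wnorm2 M z - wnorm2 M' z := by
  simp [wnorm2, Matrix.sub_mulVec, dotProduct_sub]

lemma wnorm2_smul_one {N : ℕ} (r : ℝ) (z : EC N) :
    wnorm2 (r • (1 : Matrix (Fin N) (Fin N) ℂ)) z = r * ‖z‖ ^ 2 := by
  have h1 : ((r • (1 : Matrix (Fin N) (Fin N) ℂ))).mulVec (fun i => z i)
      = r • (fun i => z i) := by
    rw [Matrix.smul_mulVec, Matrix.one_mulVec]
  have h2 : (inner ℂ z z : ℂ).re = ‖z‖ ^ 2 := by
    exact_mod_cast inner_self_eq_norm_sq (𝕜 := ℂ) z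
  rw [wnorm2, h1]
  have h3 : dotProduct (fun i => starRingEnd ℂ (z i)) (r • fun i => z i)
      = r • dotProduct (fun i => starRingEnd ℂ (z i)) (fun i => z i) := by
    rw [dotProduct_smul]
  rw [h3]
  have h4 : (dotProduct (fun i => starRingEnd ℂ (z i)) (fun i => z i)) = (inner ℂ z z : ℂ) := by
    simp [inner, dotProduct, mul_comm]
  rw [Complex.real_smul, h4]
  rw [Complex.re_ofReal_mul, h2]

lemma wnorm2_one {N : ℕ} (z : EC N) : wnorm2 (1 : Matrix (Fin N) (Fin N) ℂ) z = ‖z‖ ^ 2 := by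
  have := wnorm2_smul_one (1 : ℝ) z
  simpa using this

/-- Sublinear rate in expectation for a uniformly sampled
iterate. Under the same setting as Statement 16 but with stepsizes
`0 < α_min ≤ α_k ≤ η/L`, for every `K ≥ 1` the average of the first `K`
optimality gaps satisfies
`(1/K)·Σ_{k=1}^{K} (F(x_k) − F*) ≤ η̄(F(x₁) − F*)/(να_min·K)`; equivalently,
for `k'` uniform on `{1, …, K}`,
`E[F(x_{k'}) − F*] ≤ η̄(F(x₁) − F*)/(να_min·K)`. -/
theorem stmt17 {N : ℕ} (f : EC N → ℝ) (gradf : EC N → EC N) (L : ℝ) (hL : 0 < L)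
    (hfdiff : ∀ z : EC N, HasFDerivAt f (gradDual (gradf z)) z)
    (hlip : ∀ z₁ z₂ : EC N, ‖gradf z₁ - gradf z₂‖ ≤ L * ‖z₁ - z₂‖)
    (h : EC N → ℝ) (hconv : ConvexOn ℝ Set.univ h) (hdiff : Differentiable ℝ h)
    (F : EC N → ℝ) (hF : F = fun z => h z + f z)
    (C : Set (EC N)) (hCne : C.Nonempty) (hCcl : IsClosed C) (hCcv : Convex ℝ C)
    (Fstar : ℝ) (hFstar : IsGLB (F '' C) Fstar)
    (η ηb : ℝ) (hη : 0 < η) (hηηb : η < ηb) (ν : ℝ) (hν : 0 < ν)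
    (x : ℕ → EC N) (B : ℕ → Matrix (Fin N) (Fin N) ℂ) (α : ℕ → ℝ)
    (hxC : ∀ k, 1 ≤ k → x k ∈ C)
    (hBH : ∀ k, 1 ≤ k → (B k).IsHermitian)
    (hBlb : ∀ k, 1 ≤ k → (B k - η • (1 : Matrix (Fin N) (Fin N) ℂ)).PosSemidef)
    (hBub : ∀ k, 1 ≤ k → (ηb • (1 : Matrix (Fin N) (Fin N) ℂ) - B k).PosSemidef)
    (αmin : ℝ) (hαmin : 0 < αmin)
    (hαlb : ∀ k, 1 ≤ k → αmin ≤ α k)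
    (hαub : ∀ k, 1 ≤ k → α k ≤ η / L)
    (hupd : ∀ k, 1 ≤ k →
      IsMinOn (fun xb => Sh h (B k) (α k) (gradf (x k)) (x k) xb) C (x (k + 1)))
    (hPL : ∀ z ∈ C, ∀ α' : ℝ, 0 < α' → α' ≤ η / L →
      Dh h C 1 (α' / ηb) (gradf z) z ≥ 2 * ν * (F z - Fstar)) :
    ∀ K : ℕ, 1 ≤ K →
      (1 / (K : ℝ)) * ∑ k ∈ Finset.Icc 1 K, (F (x k) - Fstar) ≤
        ηb * (F (x 1) - Fstar) / (ν * αmin * K) := by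
  have hηb : (0:ℝ) < ηb := hη.trans hηηb
  have hGnn : ∀ k, 1 ≤ k → 0 ≤ F (x k) - Fstar := fun k hk =>
    sub_nonneg.mpr (hFstar.1 ⟨x k, hxC k hk, rfl⟩)
  have key : ∀ k, 1 ≤ k → ν * αmin * (F (x k) - Fstar) ≤
      ηb * ((F (x k) - Fstar) - (F (x (k+1)) - Fstar)) := by
    intro k hk
    have hαk : 0 < α k := lt_of_lt_of_le hαmin (hαlb k hk)
    have hdesc : f (x (k+1)) ≤ f (x k) + (inner ℂ (gradf (x k)) (x (k+1) - x k) : ℂ).re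
        + L/2 * ‖x (k+1) - x k‖^2 := by
      have := descent f gradf L hL hfdiff hlip (x k) (x (k+1) - x k)
      simpa using this
    have hquad : L/2 * ‖x (k+1) - x k‖^2 ≤ 1/(2 * α k) * wnorm2 (B k) (x (k+1) - x k) := by
      have h1 : η * ‖x (k+1) - x k‖^2 ≤ wnorm2 (B k) (x (k+1) - x k) := by
        have h0 := wnorm2_nonneg (hBlb k hk) (x (k+1) - x k)
        rw [wnorm2_sub, wnorm2_smul_one] at h0
        linarith
      have hLα : α k * L ≤ η := (le_div_iff₀ hL).mp (hαub k hk)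
      have h2 := mul_le_mul_of_nonneg_right hLα (sq_nonneg ‖x (k+1) - x k‖)
      rw [one_div_mul_eq_div, le_div_iff₀ (by positivity : (0:ℝ) < 2 * α k)]
      nlinarith [h1, h2]
    have hSstar : F (x (k+1)) - F (x k) ≤
        Sh h (B k) (α k) (gradf (x k)) (x k) (x (k+1)) := by
      rw [hF]
      simp only [Sh]
      linarith [hdesc, hquad]
    have hc : (0:ℝ) < α k / ηb := div_pos hαk hηb
    have hcmp : ∀ xb ∈ C, Sh h (B k) (α k) (gradf (x k)) (x k) (x (k+1)) ≤
        Sh h 1 (α k / ηb) (gradf (x k)) (x k) xb := by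
      intro xb hxb
      have h5 : Sh h (B k) (α k) (gradf (x k)) (x k) (x (k+1)) ≤
          Sh h (B k) (α k) (gradf (x k)) (x k) xb := isMinOn_iff.mp (hupd k hk) xb hxb
      have h6 : Sh h (B k) (α k) (gradf (x k)) (x k) xb ≤
          Sh h 1 (α k / ηb) (gradf (x k)) (x k) xb := by
        simp only [Sh, wnorm2_one]
        have h7 : wnorm2 (B k) (xb - x k) ≤ ηb * ‖xb - x k‖^2 := by
          have h0 := wnorm2_nonneg (hBub k hk) (xb - x k)
          rw [wnorm2_sub, wnorm2_smul_one] at h0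
          linarith
        have h8 : 1/(2 * (α k / ηb)) = ηb * (1/(2 * α k)) := by
          field_simp
        have h9 := mul_le_mul_of_nonneg_left h7 (by positivity : (0:ℝ) ≤ 1/(2 * α k))
        rw [h8]
        nlinarith [h9]
      linarith
    have hSle : Sh h (B k) (α k) (gradf (x k)) (x k) (x (k+1)) ≤
        sInf ((fun xb => Sh h 1 (α k / ηb) (gradf (x k)) (x k) xb) '' C) := by
      apply le_csInf (hCne.image _)
      rintro b ⟨xb, hxb, rfl⟩
      exact hcmp xb hxb
    have hPLk := hPL (x k) (hxC k hk) (α k) hαk (hαub k hk)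
    simp only [Dh, ge_iff_le] at hPLk
    set s := sInf ((fun xb => Sh h 1 (α k / ηb) (gradf (x k)) (x k) xb) '' C) with hs
    have hc0 : α k / ηb ≠ 0 := ne_of_gt hc
    have h3 := mul_le_mul_of_nonneg_left hPLk hc.le
    have h4 : (α k / ηb) * (-(2/(α k / ηb)) * s) = -2 * s := by
      field_simp
    have hsle : s ≤ -((α k / ηb) * (ν * (F (x k) - Fstar))) := by nlinarith [h3, h4]
    have hFF : F (x (k+1)) - F (x k) ≤ -((α k / ηb) * (ν * (F (x k) - Fstar))) :=
      le_trans (hSstar.trans hSle) hsle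
    have h10 : ηb * ((α k / ηb) * (ν * (F (x k) - Fstar))) = α k * (ν * (F (x k) - Fstar)) := by
      field_simp
    have h11 := mul_le_mul_of_nonneg_left hFF hηb.le
    have h13 : αmin * (ν * (F (x k) - Fstar)) ≤ α k * (ν * (F (x k) - Fstar)) :=
      mul_le_mul_of_nonneg_right (hαlb k hk) (mul_nonneg hν.le (hGnn k hk))
    nlinarith [h10, h11, h13]
  intro K hK
  have hKpos : (0:ℝ) < K := by exact_mod_cast Nat.lt_of_lt_of_le Nat.zero_lt_one hK
  have htel : ∑ k ∈ Finset.Icc 1 K, ((F (x k) - Fstar) - (F (x (k+1)) - Fstar)) =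
      (F (x 1) - Fstar) - (F (x (K+1)) - Fstar) := by
    rw [← Finset.Ico_add_one_right_eq_Icc, Finset.sum_Ico_eq_sum_range]
    simpa [add_comm] using Finset.sum_range_sub' (fun i => F (x (i+1)) - Fstar) K
  have hsum1 : ∑ k ∈ Finset.Icc 1 K, ν * αmin * (F (x k) - Fstar) ≤
      ηb * ((F (x 1) - Fstar) - (F (x (K+1)) - Fstar)) := by
    calc ∑ k ∈ Finset.Icc 1 K, ν * αmin * (F (x k) - Fstar)
        ≤ ∑ k ∈ Finset.Icc 1 K, ηb * ((F (x k) - Fstar) - (F (x (k+1)) - Fstar)) :=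
          Finset.sum_le_sum (fun k hk => key k (Finset.mem_Icc.mp hk).1)
      _ = ηb * ∑ k ∈ Finset.Icc 1 K, ((F (x k) - Fstar) - (F (x (k+1)) - Fstar)) :=
          (Finset.mul_sum _ _ _).symm
      _ = _ := by rw [htel]
  have hGK1 : 0 ≤ F (x (K+1)) - Fstar := hGnn _ (by omega)
  have hmain : ν * αmin * (∑ k ∈ Finset.Icc 1 K, (F (x k) - Fstar)) ≤
      ηb * (F (x 1) - Fstar) := by
    rw [Finset.mul_sum]
    nlinarith [hsum1, mul_nonneg hηb.le hGK1]
  have hden : (0:ℝ) < ν * αmin * (K:ℝ) := by positivity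
  rw [one_div, inv_mul_eq_div, div_le_div_iff₀ hKpos hden]
  nlinarith [mul_le_mul_of_nonneg_right hmain hKpos.le]
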